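/- In any communication graph G, if v and w are vertices such that w is a send vertex and there exists a directed path in G from v to w, then in every colouring sequence on G, w cannot be coloured yellow before v is coloured green. -/
import Mathlib


/-! Formal framework: communication graphs and the red/yellow/green colouring game
(Brodsky–Pedersen–Wagner, "On the Complexity of Buffer Allocation in Message Passing Systems"),
with receive-side token pools. -/

inductive Colour : Type
  | red | yellow | green
deriving DecidableEq

/-- A communication graph: vertices are partitioned into start/send/receive/end vertices,
`pred u v` means `u` is the component predecessor of `v` (a process arc `u → v`),
`matched u v` is a communication arc from send `u` to its matching receive `v`,
`comp v` is the index of the process component of `v`, and `pos v` is the position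
of `v` within its component chain. -/
structure CommGraph (V : Type) where
  isStart : V → Prop
  isSend : V → Prop
  isRecv : V → Prop
  isEnd : V → Prop
  pred : V → V → Prop
  matched : V → V → Prop
  comp : V → ℕ
  pos : V → ℕ

namespace CommGraph

variable {V : Type}

/-- An arc of the communication graph (process arc or communication arc). -/
def GArc (G : CommGraph V) (u v : V) : Prop := G.pred u v ∨ G.matched u v

/-- Well-formedness of a communication graph: the vertex kinds partition `V`,
components are chains (unique predecessors, positions increase along process arcs),
communication arcs go from sends to receives in different components and form a
partial matching, and the graph is acyclic (arcs admit no infinite descent). -/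
structure WF (G : CommGraph V) : Prop where
  kinds : ∀ v, G.isStart v ∨ G.isSend v ∨ G.isRecv v ∨ G.isEnd v
  start_not_send : ∀ v, G.isStart v → ¬ G.isSend v
  start_not_recv : ∀ v, G.isStart v → ¬ G.isRecv v
  start_not_end : ∀ v, G.isStart v → ¬ G.isEnd v
  send_not_recv : ∀ v, G.isSend v → ¬ G.isRecv v
  send_not_end : ∀ v, G.isSend v → ¬ G.isEnd v
  recv_not_end : ∀ v, G.isRecv v → ¬ G.isEnd v
  pred_unique : ∀ {u u' v}, G.pred u v → G.pred u' v → u = u'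
  pred_comp : ∀ {u v}, G.pred u v → G.comp u = G.comp v
  pred_pos : ∀ {u v}, G.pred u v → G.pos v = G.pos u + 1
  start_no_pred : ∀ {u v}, G.pred u v → ¬ G.isStart v
  has_pred : ∀ v, ¬ G.isStart v → ∃ u, G.pred u v
  matched_send : ∀ {u v}, G.matched u v → G.isSend u
  matched_recv : ∀ {u v}, G.matched u v → G.isRecv v
  matched_comp : ∀ {u v}, G.matched u v → G.comp u ≠ G.comp v
  matched_unique_left : ∀ {u u' v}, G.matched u v → G.matched u' v → u = u'
  matched_unique_right : ∀ {u v v'}, G.matched u v → G.matched u v' → v = v'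
  send_has_match : ∀ v, G.isSend v → ∃ w, G.matched v w
  recv_has_match : ∀ v, G.isRecv v → ∃ w, G.matched w v
  dag : WellFounded fun u v => G.GArc u v

end CommGraph

/-- A state of the colouring game: the colouring, which receive vertices currently
hold a token on their incident communication arc, and the number of available
tokens in each (per-process, receive-side) pool. -/
structure St (V : Type) where
  col : V → Colour
  tok : V → Bool
  pool : ℕ → ℕ

/-- The names of the colouring rules. -/
inductive Rule : Type
  | sendYel | recvYel | recvYelTok | sendGrn | recvGrn | endYel | endGrn
deriving DecidableEq

variable {V : Type}

/-- One move of the colouring game (receive-side buffering: the token used by the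
buffered-receive rule `recvYelTok` comes from the pool of the receiving component,
and is returned when the receive turns green). -/
inductive Step [DecidableEq V] (G : CommGraph V) : Rule → St V → St V → Prop
  | sendYel {s : St V} {v u : V} :
      G.isSend v → s.col v = .red → G.pred u v → s.col u = .green →
      Step G .sendYel s ⟨Function.update s.col v .yellow, s.tok, s.pool⟩
  | recvYel {s : St V} {v u w : V} :
      G.isRecv v → s.col v = .red → G.matched w v → s.col w = .yellow →
      G.pred u v → s.col u = .green →
      Step G .recvYel s ⟨Function.update s.col v .yellow, s.tok, s.pool⟩
  | recvYelTok {s : St V} {v w : V} :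
      G.isRecv v → s.col v = .red → G.matched w v → s.col w = .yellow →
      0 < s.pool (G.comp v) →
      Step G .recvYelTok s ⟨Function.update s.col v .yellow,
        Function.update s.tok v true,
        Function.update s.pool (G.comp v) (s.pool (G.comp v) - 1)⟩
  | sendGrn {s : St V} {v r : V} :
      G.isSend v → s.col v = .yellow → G.matched v r → s.col r = .yellow →
      Step G .sendGrn s ⟨Function.update s.col v .green, s.tok, s.pool⟩
  | recvGrn {s : St V} {v u w : V} :
      G.isRecv v → s.col v = .yellow → G.pred u v → s.col u = .green →
      G.matched w v → s.col w = .green →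
      Step G .recvGrn s ⟨Function.update s.col v .green,
        Function.update s.tok v false,
        if s.tok v then
          Function.update s.pool (G.comp v) (s.pool (G.comp v) + 1)
        else s.pool⟩
  | endYel {s : St V} {v u : V} :
      G.isEnd v → s.col v = .red → G.pred u v → s.col u = .green →
      Step G .endYel s ⟨Function.update s.col v .yellow, s.tok, s.pool⟩
  | endGrn {s : St V} {v : V} :
      G.isEnd v → s.col v = .yellow →
      Step G .endGrn s ⟨Function.update s.col v .green, s.tok, s.pool⟩

/-- `IsSeq G s l` : the list `l` of (rule, state) pairs is a valid colouring sequence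
starting from state `s`. -/
def IsSeq [DecidableEq V] (G : CommGraph V) : St V → List (Rule × St V) → Prop
  | _, [] => True
  | s, p :: l => Step G p.1 s p.2 ∧ IsSeq G p.2 l

/-- The list of states visited by a colouring sequence. -/
def states (s0 : St V) (l : List (Rule × St V)) : List (St V) :=
  s0 :: l.map Prod.snd

/-- The final state of a colouring sequence. -/
def finalSt (s0 : St V) (l : List (Rule × St V)) : St V :=
  (states s0 l).getLast (by simp [states])

open Classical in
/-- The initial state: start vertices green, all others red, no tokens placed,
token pools given by the token assignment `B` (pool of component `i` holds `B i`). -/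
noncomputable def init (G : CommGraph V) (B : ℕ → ℕ) : St V :=
  ⟨fun v => if G.isStart v then Colour.green else Colour.red, fun _ => false, B⟩

/-- A state from which no colouring rule applies. -/
def MaximalFrom [DecidableEq V] (G : CommGraph V) (s : St V) : Prop :=
  ∀ ρ t, ¬ Step G ρ s t

/-- A state is complete when every vertex is green. -/
def Completes (s : St V) : Prop := ∀ v, s.col v = Colour.green

/-- A deadlocking colouring sequence from `s0`: a maximal sequence whose final
colouring has a non-green vertex. -/
def Deadlocks [DecidableEq V] (G : CommGraph V) (s0 : St V) (l : List (Rule × St V)) : Prop :=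
  IsSeq G s0 l ∧ MaximalFrom G (finalSt s0 l) ∧ ¬ Completes (finalSt s0 l)

/-- The system is safe (deadlock free) under token assignment `B`:
every maximal colouring sequence completes. -/
def DeadlockFree [DecidableEq V] (G : CommGraph V) (B : ℕ → ℕ) : Prop :=
  ∀ l, IsSeq G (init G B) l → MaximalFrom G (finalSt (init G B) l) →
    Completes (finalSt (init G B) l)

/-- A state blocks: some yellow send has a matching red receive to which the
buffered-receive rule cannot be applied (no token available). -/
def Blocked (G : CommGraph V) (s : St V) : Prop :=
  ∃ v r, G.matched v r ∧ s.col v = Colour.yellow ∧ s.col r = Colour.red ∧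
    s.pool (G.comp r) = 0

/-- The graph is block free under token assignment `B`: no colouring sequence blocks. -/
def BlockFree [DecidableEq V] (G : CommGraph V) (B : ℕ → ℕ) : Prop :=
  ∀ l, IsSeq G (init G B) l → ¬ Blocked G (finalSt (init G B) l)


/-- Invariant: green vertices have all their arc-predecessors green, and non-red
non-receive vertices have their component predecessor green. -/
def ColInv (G : CommGraph V) (s : St V) : Prop :=
  (∀ u x, s.col u = Colour.green → G.GArc x u → s.col x = Colour.green) ∧
  (∀ u x, ¬ G.isRecv u → s.col u ≠ Colour.red → G.pred x u → s.col x = Colour.green)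

private lemma upd_green [DecidableEq V] {s : St V} {a x : V} {c : Colour}
    (ha : s.col a ≠ Colour.green) (hx : s.col x = Colour.green) :
    Function.update s.col a c x = Colour.green := by
  rw [Function.update_of_ne (by rintro rfl; exact ha hx)]
  exact hx

private lemma step_mono [DecidableEq V] {G : CommGraph V} {ρ : Rule} {s t : St V}
    (h : Step G ρ s t) : ∀ x, s.col x = Colour.green → t.col x = Colour.green := by
  intro x hx
  cases h with
  | @sendYel s v u hv hc hp hu => exact upd_green (a := v) (by simp [hc]) hx
  | @recvYel s v u w0 hv hc hm hw hp hu => exact upd_green (a := v) (by simp [hc]) hx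
  | @recvYelTok s v w0 hv hc hm hw hpool => exact upd_green (a := v) (by simp [hc]) hx
  | @sendGrn s v r hv hc hm hr => exact upd_green (a := v) (by simp [hc]) hx
  | @recvGrn s v u w0 hv hc hp hu hm hw => exact upd_green (a := v) (by simp [hc]) hx
  | @endYel s v u hv hc hp hu => exact upd_green (a := v) (by simp [hc]) hx
  | @endGrn s v hv hc => exact upd_green (a := v) (by simp [hc]) hx

private lemma step_inv [DecidableEq V] {G : CommGraph V} (hwf : G.WF) {ρ : Rule} {s t : St V}
    (hinv : ColInv G s) (h : Step G ρ s t) : ColInv G t := by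
  cases h with
  | @sendYel s v u0 hv hc hp hu =>
    constructor
    · intro a x ha hx
      by_cases hav : a = v
      · subst hav; simp [Function.update_self] at ha
      · replace ha : s.col a = Colour.green :=
          (Function.update_of_ne hav Colour.yellow s.col).symm.trans ha
        exact upd_green (a := v) (by simp [hc]) (hinv.1 a x ha hx)
    · intro a x hnr ha hx
      by_cases hav : a = v
      · subst hav
        rw [hwf.pred_unique hx hp]
        exact upd_green (a := a) (by simp [hc]) hu
      · replace ha : s.col a ≠ Colour.red :=
          fun h' => ha ((Function.update_of_ne hav Colour.yellow s.col).trans h')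
        exact upd_green (a := v) (by simp [hc]) (hinv.2 a x hnr ha hx)
  | @recvYel s v u0 w0 hv hc hm hw hp hu =>
    constructor
    · intro a x ha hx
      by_cases hav : a = v
      · subst hav; simp [Function.update_self] at ha
      · replace ha : s.col a = Colour.green :=
          (Function.update_of_ne hav Colour.yellow s.col).symm.trans ha
        exact upd_green (a := v) (by simp [hc]) (hinv.1 a x ha hx)
    · intro a x hnr ha hx
      by_cases hav : a = v
      · exact absurd (hav ▸ hv) hnr
      · replace ha : s.col a ≠ Colour.red :=
          fun h' => ha ((Function.update_of_ne hav Colour.yellow s.col).trans h')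
        exact upd_green (a := v) (by simp [hc]) (hinv.2 a x hnr ha hx)
  | @recvYelTok s v w0 hv hc hm hw hpool =>
    constructor
    · intro a x ha hx
      by_cases hav : a = v
      · subst hav; simp [Function.update_self] at ha
      · replace ha : s.col a = Colour.green :=
          (Function.update_of_ne hav Colour.yellow s.col).symm.trans ha
        exact upd_green (a := v) (by simp [hc]) (hinv.1 a x ha hx)
    · intro a x hnr ha hx
      by_cases hav : a = v
      · exact absurd (hav ▸ hv) hnr
      · replace ha : s.col a ≠ Colour.red :=
          fun h' => ha ((Function.update_of_ne hav Colour.yellow s.col).trans h')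
        exact upd_green (a := v) (by simp [hc]) (hinv.2 a x hnr ha hx)
  | @sendGrn s v r hv hc hm hr =>
    constructor
    · intro a x ha hx
      by_cases hav : a = v
      · subst hav
        rcases hx with hx | hx
        · exact upd_green (a := a) (by simp [hc])
            (hinv.2 a x (hwf.send_not_recv a hv) (by simp [hc]) hx)
        · exact absurd (hwf.matched_recv hx) (hwf.send_not_recv a hv)
      · replace ha : s.col a = Colour.green :=
          (Function.update_of_ne hav Colour.green s.col).symm.trans ha
        exact upd_green (a := v) (by simp [hc]) (hinv.1 a x ha hx)
    · intro a x hnr ha hx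
      by_cases hav : a = v
      · subst hav
        exact upd_green (a := a) (by simp [hc]) (hinv.2 a x hnr (by simp [hc]) hx)
      · replace ha : s.col a ≠ Colour.red :=
          fun h' => ha ((Function.update_of_ne hav Colour.green s.col).trans h')
        exact upd_green (a := v) (by simp [hc]) (hinv.2 a x hnr ha hx)
  | @recvGrn s v u0 w0 hv hc hp hu hm hw =>
    constructor
    · intro a x ha hx
      by_cases hav : a = v
      · subst hav
        rcases hx with hx | hx
        · rw [hwf.pred_unique hx hp]
          exact upd_green (a := a) (by simp [hc]) hu
        · rw [hwf.matched_unique_left hx hm]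
          exact upd_green (a := a) (by simp [hc]) hw
      · replace ha : s.col a = Colour.green :=
          (Function.update_of_ne hav Colour.green s.col).symm.trans ha
        exact upd_green (a := v) (by simp [hc]) (hinv.1 a x ha hx)
    · intro a x hnr ha hx
      by_cases hav : a = v
      · exact absurd (hav ▸ hv) hnr
      · replace ha : s.col a ≠ Colour.red :=
          fun h' => ha ((Function.update_of_ne hav Colour.green s.col).trans h')
        exact upd_green (a := v) (by simp [hc]) (hinv.2 a x hnr ha hx)
  | @endYel s v u0 hv hc hp hu =>
    constructor
    · intro a x ha hx
      by_cases hav : a = v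
      · subst hav; simp [Function.update_self] at ha
      · replace ha : s.col a = Colour.green :=
          (Function.update_of_ne hav Colour.yellow s.col).symm.trans ha
        exact upd_green (a := v) (by simp [hc]) (hinv.1 a x ha hx)
    · intro a x hnr ha hx
      by_cases hav : a = v
      · subst hav
        rw [hwf.pred_unique hx hp]
        exact upd_green (a := a) (by simp [hc]) hu
      · replace ha : s.col a ≠ Colour.red :=
          fun h' => ha ((Function.update_of_ne hav Colour.yellow s.col).trans h')
        exact upd_green (a := v) (by simp [hc]) (hinv.2 a x hnr ha hx)
  | @endGrn s v hv hc =>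
    constructor
    · intro a x ha hx
      by_cases hav : a = v
      · subst hav
        rcases hx with hx | hx
        · exact upd_green (a := a) (by simp [hc])
            (hinv.2 a x (fun hr => hwf.recv_not_end a hr hv) (by simp [hc]) hx)
        · exact absurd (hwf.matched_recv hx) (fun hr => hwf.recv_not_end a hr hv)
      · replace ha : s.col a = Colour.green :=
          (Function.update_of_ne hav Colour.green s.col).symm.trans ha
        exact upd_green (a := v) (by simp [hc]) (hinv.1 a x ha hx)
    · intro a x hnr ha hx
      by_cases hav : a = v
      · subst hav
        exact upd_green (a := a) (by simp [hc]) (hinv.2 a x hnr (by simp [hc]) hx)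
      · replace ha : s.col a ≠ Colour.red :=
          fun h' => ha ((Function.update_of_ne hav Colour.green s.col).trans h')
        exact upd_green (a := v) (by simp [hc]) (hinv.2 a x hnr ha hx)

private lemma inv_init (G : CommGraph V) (hwf : G.WF) (B : ℕ → ℕ) : ColInv G (init G B) := by
  constructor
  · intro u x hu hx
    by_cases h : G.isStart u
    · rcases hx with hx | hx
      · exact absurd h (hwf.start_no_pred hx)
      · exact absurd (hwf.matched_recv hx) (hwf.start_not_recv u h)
    · simp [init, h] at hu
  · intro u x hnr hu hx
    by_cases h : G.isStart u
    · exact absurd h (hwf.start_no_pred hx)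
    · simp [init, h] at hu

private lemma green_anc {G : CommGraph V} {s : St V} (hinv : ColInv G s) {a b : V}
    (h : Relation.TransGen G.GArc a b) (hb : s.col b = Colour.green) :
    s.col a = Colour.green := by
  induction h with
  | single h1 => exact hinv.1 _ _ hb h1
  | tail h1 hbc ih => exact ih (hinv.1 _ _ hb hbc)

private lemma inv_seq [DecidableEq V] {G : CommGraph V} (hwf : G.WF) :
    ∀ (l : List (Rule × St V)) (s0 : St V), IsSeq G s0 l → ColInv G s0 →
      ∀ s ∈ states s0 l, ColInv G s := by
  intro l
  induction l with
  | nil => intro s0 _ h0 s hs; simp [states] at hs; subst hs; exact h0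
  | cons p l ih =>
    intro s0 hseq h0 s hs
    obtain ⟨hstep, hrest⟩ := hseq
    have h1 := step_inv hwf h0 hstep
    simp only [states, List.map_cons, List.mem_cons] at hs
    rcases hs with rfl | hs
    · exact h0
    · exact ih p.2 hrest h1 s (by simpa [states] using hs)

/-- **Lemma.** In any communication graph `G`, if `w` is a send vertex and there is
a directed path in `G` from `v` to `w`, then in every colouring sequence on `G`,
`w` cannot be coloured yellow before `v` is coloured green: at every state of the
sequence, if `w` is not red then `v` is green. -/
theorem send_waits_for_ancestors {V : Type} [DecidableEq V] [Fintype V]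
    (G : CommGraph V) (hwf : G.WF) (B : ℕ → ℕ) (v w : V)
    (hsend : G.isSend w) (hpath : Relation.TransGen G.GArc v w)
    (l : List (Rule × St V)) (hseq : IsSeq G (init G B) l) :
    ∀ s ∈ states (init G B) l, s.col w ≠ Colour.red → s.col v = Colour.green := by
  have h0 := inv_init G hwf B
  intro s hs hw
  have hinv : ColInv G s := inv_seq hwf l (init G B) hseq h0 s hs
  have hnstart : ¬ G.isStart w := fun h => hwf.start_not_send w h hsend
  obtain ⟨u, hu⟩ := hwf.has_pred w hnstart
  have hug : s.col u = Colour.green := hinv.2 w u (hwf.send_not_recv w hsend) hw hu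
  cases hpath with
  | single harc =>
    rcases harc with hp | hm
    · rw [hwf.pred_unique hp hu]; exact hug
    · exact absurd (hwf.matched_recv hm) (hwf.send_not_recv w hsend)
  | tail h harc =>
    rcases harc with hp | hm
    · rename_i b
      have : b = u := hwf.pred_unique hp hu
      exact green_anc hinv h (this ▸ hug)
    · exact absurd (hwf.matched_recv hm) (hwf.send_not_recv w hsend)
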